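/- Let S be a powerful set over a finite set E and let e ∈ E. Then e is a coloop of S if and only if r_S(E) = r_S(E∖{e}) + 1. -/
import Mathlib


/-- A family `S` of subsets of a finite set `E` is *powerful* if every member of `S`
is a subset of `E` and, for every `X ⊆ E`, the number of members of `S` that are
subsets of `X` is a power of 2. -/
def Powerful {α : Type*} [DecidableEq α] (E : Finset α) (S : Finset (Finset α)) : Prop :=
  (∀ Y ∈ S, Y ⊆ E) ∧ ∀ X ⊆ E, ∃ k : ℕ, (S.filter (fun Y => Y ⊆ X)).card = 2 ^ k

/-- An element `e` of `E` is a *coloop* of `S` if there is a family `T` of subsets of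
`E∖{e}` with `S = {X : X ∈ T} ∪ {X ∪ {e} : X ∈ T}`. -/
def IsColoop {α : Type*} [DecidableEq α] (E : Finset α) (S : Finset (Finset α)) (e : α) : Prop :=
  ∃ T : Finset (Finset α), (∀ Y ∈ T, Y ⊆ E.erase e) ∧ S = T ∪ T.image (insert e)

section Aux

variable {α : Type*} [DecidableEq α]

/-- Toggle the element `e` in the set `Y`. -/
def flipElem (e : α) (Y : Finset α) : Finset α :=
  if e ∈ Y then Y.erase e else insert e Y

lemma flipElem_flipElem (e : α) (Y : Finset α) : flipElem e (flipElem e Y) = Y := by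
  unfold flipElem
  by_cases h : e ∈ Y
  · rw [if_pos h, if_neg (Finset.notMem_erase e Y), Finset.insert_erase h]
  · rw [if_neg h, if_pos (Finset.mem_insert_self e Y), Finset.erase_insert h]

lemma flipElem_subset {e : α} {X Y : Finset α} (he : e ∈ X) (hYX : Y ⊆ X) :
    flipElem e Y ⊆ X := by
  unfold flipElem
  split_ifs
  · exact (Finset.erase_subset e Y).trans hYX
  · exact Finset.insert_subset he hYX

lemma mem_flipElem {x e : α} (hx : x ≠ e) (Y : Finset α) : x ∈ flipElem e Y ↔ x ∈ Y := by
  unfold flipElem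
  split_ifs <;> simp [Finset.mem_erase, Finset.mem_insert, hx]

lemma mem_pair_iff_of_even {β : Type*} [DecidableEq β] {D : Finset β} {a b : β}
    (hD : D ⊆ {a, b}) (_hab : a ≠ b) (hev : Even D.card) : a ∈ D ↔ b ∈ D := by
  have key : ∀ (D' : Finset β) (a' b' : β), D' ⊆ {a', b'} → Even D'.card →
      a' ∈ D' → b' ∉ D' → False := by
    intro D' a' b' hD' hev' ha hb
    have hsub : D' ⊆ {a'} := by
      intro x hx
      rcases Finset.mem_insert.mp (hD' hx) with rfl | hx'
      · exact Finset.mem_singleton_self x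
      · rw [Finset.mem_singleton] at hx'
        subst hx'
        exact absurd hx hb
    have hDeq : D' = {a'} := Finset.Subset.antisymm hsub (Finset.singleton_subset_iff.mpr ha)
    rw [hDeq, Finset.card_singleton] at hev'
    exact (Nat.not_even_iff.mpr rfl) hev'
  constructor
  · intro h
    by_contra h'
    exact key D a b hD hev h h'
  · intro h
    by_contra h'
    have hD' : D ⊆ {b, a} := by rwa [Finset.pair_comm]
    exact key D b a hD' hev h h'

lemma powerful_empty_mem {E : Finset α} {S : Finset (Finset α)} (hS : Powerful E S) :
    (∅ : Finset α) ∈ S := by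
  obtain ⟨k, hk⟩ := hS.2 ∅ (Finset.empty_subset E)
  have hpos : 0 < (S.filter (fun Y => Y ⊆ ∅)).card := by
    rw [hk]; positivity
  obtain ⟨Y, hY⟩ := Finset.card_pos.mp hpos
  rw [Finset.mem_filter] at hY
  have h2 := Finset.subset_empty.mp hY.2
  exact h2 ▸ hY.1

/-- Key structural lemma: a powerful set containing `{e}` is closed under toggling `e`
within any `X ⊆ E` containing `e`. -/
lemma powerful_flip_closed {E : Finset α} {S : Finset (Finset α)} (hS : Powerful E S)
    {e : α} (hem : ({e} : Finset α) ∈ S) :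
    ∀ n (X : Finset α), X.card ≤ n → e ∈ X → X ⊆ E → ∀ Y ∈ S, Y ⊆ X → flipElem e Y ∈ S := by
  have hS0 : (∅ : Finset α) ∈ S := powerful_empty_mem hS
  intro n
  induction n with
  | zero =>
    intro X hX heX _ _ _ _
    have : 0 < X.card := Finset.card_pos.mpr ⟨e, heX⟩
    omega
  | succ n ih =>
    intro X hXcard heX hXE Y hYS hYX
    by_cases hmiss : ∃ x ∈ X, x ≠ e ∧ x ∉ Y
    · obtain ⟨x, hxX, hxe, hxY⟩ := hmiss
      have h1 : e ∈ X.erase x := Finset.mem_erase.mpr ⟨hxe.symm, heX⟩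
      have h2 : (X.erase x).card ≤ n := by
        rw [Finset.card_erase_of_mem hxX]; omega
      exact ih (X.erase x) h2 h1 ((Finset.erase_subset x X).trans hXE) Y hYS
        (Finset.subset_erase.mpr ⟨hYX, hxY⟩)
    · -- every element of X other than e is in Y; so Y = X or Y = X.erase e.
      push_neg at hmiss
      set SX := S.filter (fun Z => Z ⊆ X) with hSXdef
      set U := SX.filter (fun Z => ∃ x ∈ X, x ≠ e ∧ x ∉ Z) with hUdef
      -- U is closed under flipping e
      have hUcl : ∀ Z ∈ U, flipElem e Z ∈ U := by
        intro Z hZ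
        rw [hUdef, Finset.mem_filter, hSXdef, Finset.mem_filter] at hZ
        obtain ⟨⟨hZS, hZX⟩, x, hxX, hxe, hxZ⟩ := hZ
        have h1 : e ∈ X.erase x := Finset.mem_erase.mpr ⟨hxe.symm, heX⟩
        have h2 : (X.erase x).card ≤ n := by
          rw [Finset.card_erase_of_mem hxX]; omega
        have hflS : flipElem e Z ∈ S :=
          ih (X.erase x) h2 h1 ((Finset.erase_subset x X).trans hXE) Z hZS
            (Finset.subset_erase.mpr ⟨hZX, hxZ⟩)
        rw [hUdef, Finset.mem_filter, hSXdef, Finset.mem_filter]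
        exact ⟨⟨hflS, flipElem_subset heX hZX⟩, x, hxX, hxe,
          fun h => hxZ ((mem_flipElem hxe Z).mp h)⟩
      -- U has even cardinality
      have hUeven : Even U.card := by
        have hsplit : (U.filter (fun Z => e ∈ Z)).card
            + (U.filter (fun Z => ¬ e ∈ Z)).card = U.card :=
          Finset.card_filter_add_card_filter_not _
        have hbij : (U.filter (fun Z => e ∈ Z)).card = (U.filter (fun Z => ¬ e ∈ Z)).card := by
          apply Finset.card_bij' (fun Z _ => flipElem e Z) (fun Z _ => flipElem e Z)
          · intro Z hZ
            rw [Finset.mem_filter] at hZ ⊢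
            refine ⟨hUcl Z hZ.1, ?_⟩
            unfold flipElem
            rw [if_pos hZ.2]
            exact Finset.notMem_erase e Z
          · intro Z hZ
            rw [Finset.mem_filter] at hZ ⊢
            refine ⟨hUcl Z hZ.1, ?_⟩
            unfold flipElem
            rw [if_neg hZ.2]
            exact Finset.mem_insert_self e Z
          · intro Z _; exact flipElem_flipElem e Z
          · intro Z _; exact flipElem_flipElem e Z
        refine ⟨(U.filter (fun Z => e ∈ Z)).card, ?_⟩
        omega
      -- SX has even cardinality
      have hSXeven : Even SX.card := by
        obtain ⟨k, hk⟩ := hS.2 X hXE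
        have hS0mem : (∅ : Finset α) ∈ SX := by
          rw [hSXdef, Finset.mem_filter]; exact ⟨hS0, Finset.empty_subset X⟩
        have hemem : ({e} : Finset α) ∈ SX := by
          rw [hSXdef, Finset.mem_filter]; exact ⟨hem, Finset.singleton_subset_iff.mpr heX⟩
        have h2le : 1 < SX.card :=
          Finset.one_lt_card.mpr ⟨∅, hS0mem, {e}, hemem, (Finset.singleton_ne_empty e).symm⟩
        have hk' : SX.card = 2 ^ k := hk
        have hk0 : k ≠ 0 := by
          rintro rfl
          rw [hk', pow_zero] at h2le
          omega
        obtain ⟨m, rfl⟩ := Nat.exists_eq_succ_of_ne_zero hk0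
        exact ⟨2 ^ m, by rw [hk', pow_succ]; ring⟩
      -- D := SX \ U has even cardinality and is contained in {X, X.erase e}
      have hUsub : U ⊆ SX := Finset.filter_subset _ _
      have hDsum : (SX \ U).card + U.card = SX.card := Finset.card_sdiff_add_card_eq_card hUsub
      have hDeven : Even (SX \ U).card := by
        obtain ⟨a, ha⟩ := hUeven
        obtain ⟨b, hb⟩ := hSXeven
        exact ⟨b - a, by omega⟩
      have hDsub : SX \ U ⊆ {X, X.erase e} := by
        intro Z hZ
        rw [Finset.mem_sdiff] at hZ
        obtain ⟨hZSX, hZU⟩ := hZ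
        rw [hSXdef, Finset.mem_filter] at hZSX
        have hall : ∀ x ∈ X, x ≠ e → x ∈ Z := by
          intro x hx hxe
          by_contra hxZ
          exact hZU (by
            rw [hUdef, Finset.mem_filter]
            exact ⟨by rw [hSXdef, Finset.mem_filter]; exact hZSX, x, hx, hxe, hxZ⟩)
        by_cases heZ : e ∈ Z
        · have : Z = X := by
            apply Finset.Subset.antisymm hZSX.2
            intro x hx
            by_cases hxe : x = e
            · rwa [hxe]
            · exact hall x hx hxe
          rw [this]; exact Finset.mem_insert_self _ _
        · have : Z = X.erase e := by
            apply Finset.Subset.antisymm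
            · exact Finset.subset_erase.mpr ⟨hZSX.2, heZ⟩
            · intro x hx
              rw [Finset.mem_erase] at hx
              exact hall x hx.2 hx.1
          rw [this]
          exact Finset.mem_insert_of_mem (Finset.mem_singleton_self _)
      have hXne : X ≠ X.erase e := by
        intro h
        have := Finset.notMem_erase e X
        rw [← h] at this
        exact this heX
      have hpair : X ∈ SX \ U ↔ X.erase e ∈ SX \ U :=
        mem_pair_iff_of_even hDsub hXne hDeven
      -- Y = X or Y = X.erase e; in either case Y ∈ SX \ U
      have hYSX : Y ∈ SX := by rw [hSXdef, Finset.mem_filter]; exact ⟨hYS, hYX⟩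
      have hYU : Y ∉ U := by
        intro h
        rw [hUdef, Finset.mem_filter] at h
        obtain ⟨_, x, hx, hxe, hxY⟩ := h
        exact hxY (hmiss x hx hxe)
      have hYD : Y ∈ SX \ U := Finset.mem_sdiff.mpr ⟨hYSX, hYU⟩
      have hsubY : X.erase e ⊆ Y := by
        intro x hx
        rw [Finset.mem_erase] at hx
        exact hmiss x hx.2 hx.1
      by_cases heY : e ∈ Y
      · -- Y = X, goal flipElem e Y = X.erase e ∈ S
        have hYeq : Y = X := by
          apply Finset.Subset.antisymm hYX
          intro x hx
          by_cases hxe : x = e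
          · rwa [hxe]
          · exact hsubY (Finset.mem_erase.mpr ⟨hxe, hx⟩)
        have : X.erase e ∈ SX \ U := hpair.mp (hYeq ▸ hYD)
        have hmem : X.erase e ∈ SX := (Finset.mem_sdiff.mp this).1
        rw [hSXdef, Finset.mem_filter] at hmem
        unfold flipElem
        rw [if_pos heY, hYeq]
        exact hmem.1
      · -- Y = X.erase e, goal flipElem e Y = insert e Y = X ∈ S
        have hYeq : Y = X.erase e :=
          Finset.Subset.antisymm (Finset.subset_erase.mpr ⟨hYX, heY⟩) hsubY
        have : X ∈ SX \ U := hpair.mpr (hYeq ▸ hYD)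
        have hmem : X ∈ SX := (Finset.mem_sdiff.mp this).1
        rw [hSXdef, Finset.mem_filter] at hmem
        unfold flipElem
        rw [if_neg heY, hYeq, Finset.insert_erase heX]
        exact hmem.1

lemma isColoop_iff_singleton_mem {E : Finset α} {S : Finset (Finset α)} (hS : Powerful E S)
    {e : α} (he : e ∈ E) : IsColoop E S e ↔ ({e} : Finset α) ∈ S := by
  have hS0 : (∅ : Finset α) ∈ S := powerful_empty_mem hS
  constructor
  · rintro ⟨T, hT, hST⟩
    have hT0 : (∅ : Finset α) ∈ T := by
      rw [hST] at hS0
      rcases Finset.mem_union.mp hS0 with h | h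
      · exact h
      · obtain ⟨Z, _, hZ⟩ := Finset.mem_image.mp h
        exact absurd hZ (Finset.insert_ne_empty e Z)
    rw [hST]
    apply Finset.mem_union_right
    exact Finset.mem_image.mpr ⟨∅, hT0, rfl⟩
  · intro hme
    have hcl : ∀ Y ∈ S, flipElem e Y ∈ S := fun Y hY =>
      powerful_flip_closed hS hme E.card E le_rfl he subset_rfl Y hY (hS.1 Y hY)
    refine ⟨S.filter (fun Y => e ∉ Y), ?_, ?_⟩
    · intro Y hY
      rw [Finset.mem_filter] at hY
      exact Finset.subset_erase.mpr ⟨hS.1 Y hY.1, hY.2⟩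
    · ext Y
      simp only [Finset.mem_union, Finset.mem_filter, Finset.mem_image]
      constructor
      · intro hY
        by_cases heY : e ∈ Y
        · right
          refine ⟨Y.erase e, ⟨?_, Finset.notMem_erase e Y⟩, Finset.insert_erase heY⟩
          have := hcl Y hY
          unfold flipElem at this
          rwa [if_pos heY] at this
        · exact Or.inl ⟨hY, heY⟩
      · rintro (⟨hY, _⟩ | ⟨Z, ⟨hZ, heZ⟩, rfl⟩)
        · exact hY
        · have := hcl Z hZ
          unfold flipElem at this
          rwa [if_neg heZ] at this

end Aux

/-- For a powerful set `S` over `E` and `e ∈ E`, the element `e` is a coloop of `S`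
iff `r_S(E) = r_S(E∖{e}) + 1`, where `r_S(X)` is the unique `k` with
`|{Y ∈ S : Y ∩ X = ∅}| · 2^k = |S|`. -/
theorem isColoop_iff_rank_drop {α : Type*} [DecidableEq α]
    (E : Finset α) (S : Finset (Finset α)) (hS : Powerful E S) (e : α) (he : e ∈ E)
    (kE : ℕ) (hkE : (S.filter (fun Y => Y ∩ E = ∅)).card * 2 ^ kE = S.card)
    (kE' : ℕ)
    (hkE' : (S.filter (fun Y => Y ∩ (E.erase e) = ∅)).card * 2 ^ kE' = S.card) :
    IsColoop E S e ↔ kE = kE' + 1 := by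
  have hS0 : (∅ : Finset α) ∈ S := powerful_empty_mem hS
  -- first filter is {∅}
  have h1 : (S.filter (fun Y => Y ∩ E = ∅)) = {∅} := by
    ext Y
    rw [Finset.mem_filter, Finset.mem_singleton]
    constructor
    · rintro ⟨hYS, hint⟩
      rwa [Finset.inter_eq_left.mpr (hS.1 Y hYS)] at hint
    · rintro rfl
      exact ⟨hS0, Finset.empty_inter E⟩
  rw [h1, Finset.card_singleton, one_mul] at hkE
  -- second filter: Y ∈ S and Y ⊆ {e}
  have hmem : ∀ Y, Y ∈ S.filter (fun Y => Y ∩ E.erase e = ∅) ↔ Y ∈ S ∧ Y ⊆ {e} := by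
    intro Y
    rw [Finset.mem_filter]
    constructor
    · rintro ⟨hYS, hint⟩
      refine ⟨hYS, fun x hx => ?_⟩
      rw [Finset.mem_singleton]
      by_contra hxe
      have hmem' : x ∈ Y ∩ E.erase e :=
        Finset.mem_inter.mpr ⟨hx, Finset.mem_erase.mpr ⟨hxe, hS.1 Y hYS hx⟩⟩
      rw [hint] at hmem'
      exact Finset.notMem_empty x hmem'
    · rintro ⟨hYS, hY⟩
      refine ⟨hYS, ?_⟩
      ext x
      simp only [Finset.mem_inter, Finset.mem_erase, Finset.notMem_empty, iff_false, not_and]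
      intro hxY hxe
      exact absurd (Finset.mem_singleton.mp (hY hxY)) hxe
  by_cases hme : ({e} : Finset α) ∈ S
  · -- second filter is {∅, {e}}, card 2
    have h2 : (S.filter (fun Y => Y ∩ E.erase e = ∅)) = {∅, {e}} := by
      ext Y
      rw [hmem Y, Finset.mem_insert, Finset.mem_singleton]
      constructor
      · rintro ⟨_, hY⟩
        exact Finset.subset_singleton_iff.mp hY
      · rintro (rfl | rfl)
        · exact ⟨hS0, Finset.empty_subset _⟩
        · exact ⟨hme, subset_rfl⟩
    have hcard2 : (S.filter (fun Y => Y ∩ E.erase e = ∅)).card = 2 := by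
      rw [h2]
      rw [Finset.card_insert_of_notMem
        (fun h => (Finset.singleton_ne_empty e) (Finset.mem_singleton.mp h).symm),
        Finset.card_singleton]
    rw [hcard2] at hkE'
    have harith : kE = kE' + 1 := by
      have h2 : (2 : ℕ) ^ (kE' + 1) = 2 ^ kE := by
        have hr : (2 : ℕ) ^ (kE' + 1) = 2 * 2 ^ kE' := by ring
        rw [hr, hkE', ← hkE]
      exact (Nat.pow_right_injective (le_refl 2) h2).symm
    exact iff_of_true ((isColoop_iff_singleton_mem hS he).mpr hme) harith
  · -- second filter is {∅}, card 1
    have h2 : (S.filter (fun Y => Y ∩ E.erase e = ∅)) = {∅} := by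
      ext Y
      rw [hmem Y, Finset.mem_singleton]
      constructor
      · rintro ⟨hYS, hY⟩
        rcases Finset.subset_singleton_iff.mp hY with rfl | rfl
        · rfl
        · exact absurd hYS hme
      · rintro rfl
        exact ⟨hS0, Finset.empty_subset _⟩
    rw [h2, Finset.card_singleton, one_mul] at hkE'
    have hkeq : kE = kE' := Nat.pow_right_injective (le_refl 2) (hkE.trans hkE'.symm)
    refine iff_of_false ?_ (by omega)
    rw [isColoop_iff_singleton_mem hS he]
    exact hme
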